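/- Let f : Ω → ℂ be nonvanishing C¹ on an open Ω ⊆ ℝ³ and let W = W₀ + W⃗ : Ω → ℍ(ℂ) be a C² solution of the main quaternionic Vekua equation D W = (Df/f)·\bar{W}, where \bar{W} = W₀ - W⃗ is the quaternionic conjugate. Then: (i) the scalar part W₀ solves -ΔW₀ + (Δf/f)W₀ = 0; (ii) u := f⁻¹W₀ solves div(f² grad u) = 0; and (iii) v⃗ := fW⃗ solves rot(f⁻² rot v⃗) = 0. -/

import Mathlib

noncomputable section

/-- ℝ³ -/
abbrev V3 := Fin 3 → ℝ
/-- Complex quaternions ℍ(ℂ) -/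
abbrev HC := Quaternion ℂ

/-- partial derivative ∂ₖ of a function on ℝ³ -/
noncomputable def pd {E : Type*} [NormedAddCommGroup E] [NormedSpace ℝ E]
    (k : Fin 3) (g : V3 → E) (x : V3) : E :=
  fderiv ℝ g x (Pi.single k 1)

noncomputable def grad {E : Type*} [NormedAddCommGroup E] [NormedSpace ℝ E]
    (g : V3 → E) (x : V3) : Fin 3 → E := fun k => pd k g x

noncomputable def dvg {E : Type*} [NormedAddCommGroup E] [NormedSpace ℝ E]
    (F : V3 → Fin 3 → E) (x : V3) : E :=
  pd 0 (fun y => F y 0) x + pd 1 (fun y => F y 1) x + pd 2 (fun y => F y 2) x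

noncomputable def rot {E : Type*} [NormedAddCommGroup E] [NormedSpace ℝ E]
    (F : V3 → Fin 3 → E) (x : V3) : Fin 3 → E :=
  ![pd 1 (fun y => F y 2) x - pd 2 (fun y => F y 1) x,
    pd 2 (fun y => F y 0) x - pd 0 (fun y => F y 2) x,
    pd 0 (fun y => F y 1) x - pd 1 (fun y => F y 0) x]

/-- scalar Laplacian -/
noncomputable def lapS {E : Type*} [NormedAddCommGroup E] [NormedSpace ℝ E]
    (g : V3 → E) (x : V3) : E :=
  pd 0 (pd 0 g) x + pd 1 (pd 1 g) x + pd 2 (pd 2 g) x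

/-- purely vectorial quaternion from a ℂ³ vector -/
def vecq (v : Fin 3 → ℂ) : HC := ⟨0, v 0, v 1, v 2⟩
/-- scalar quaternion -/
def scq (a : ℂ) : HC := ⟨a, 0, 0, 0⟩

def e1 : HC := ⟨0,1,0,0⟩
def e2 : HC := ⟨0,0,1,0⟩
def e3 : HC := ⟨0,0,0,1⟩

/-- vector part of a quaternion, as a ℂ³ vector -/
def vecPart (a : HC) : Fin 3 → ℂ := ![a.imI, a.imJ, a.imK]

/-- quaternionic conjugation C_H -/
def qconj (a : HC) : HC := ⟨a.re, -a.imI, -a.imJ, -a.imK⟩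

/-- componentwise partial derivative of an ℍ(ℂ)-valued function -/
noncomputable def qpd (k : Fin 3) (F : V3 → HC) (x : V3) : HC :=
  ⟨pd k (fun y => (F y).re) x, pd k (fun y => (F y).imI) x,
   pd k (fun y => (F y).imJ) x, pd k (fun y => (F y).imK) x⟩

/-- The Moisil–Teodorescu (Dirac) operator D = Σₖ iₖ∂ₖ -/
noncomputable def Dq (F : V3 → HC) (x : V3) : HC :=
  e1 * qpd 0 F x + e2 * qpd 1 F x + e3 * qpd 2 F x

/-- componentwise Laplacian of an ℍ(ℂ)-valued function -/
noncomputable def qlap (F : V3 → HC) (x : V3) : HC :=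
  qpd 0 (qpd 0 F) x + qpd 1 (qpd 1 F) x + qpd 2 (qpd 2 F) x

/-- ContDiffOn for ℍ(ℂ)-valued functions, componentwise -/
def QContDiffOn (n : ℕ∞) (F : V3 → HC) (s : Set V3) : Prop :=
  ContDiffOn ℝ n (fun x => (F x).re) s ∧ ContDiffOn ℝ n (fun x => (F x).imI) s ∧
  ContDiffOn ℝ n (fun x => (F x).imJ) s ∧ ContDiffOn ℝ n (fun x => (F x).imK) s

/-- euclidean norm on ℝ³ -/
noncomputable def nrm (x : V3) : ℝ := Real.sqrt (x 0 ^ 2 + x 1 ^ 2 + x 2 ^ 2)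

/-- fundamental solution of the Helmholtz operator -/
noncomputable def theta (α : ℂ) (x : V3) : ℂ :=
  -Complex.exp (Complex.I * α * (nrm x : ℂ)) / (4 * Real.pi * (nrm x : ℂ))

/-- x as a purely vectorial quaternion -/
def xq (x : V3) : HC := vecq fun k => ((x k : ℝ) : ℂ)


lemma pd_congr_ev {F G : V3 → ℂ} {x : V3} (h : F =ᶠ[nhds x] G) (k : Fin 3) :
    pd k F x = pd k G x := by
  unfold pd; rw [h.fderiv_eq]

lemma pd_add {a b : V3 → ℂ} {x : V3} (ha : DifferentiableAt ℝ a x)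
    (hb : DifferentiableAt ℝ b x) (k : Fin 3) :
    pd k (fun y => a y + b y) x = pd k a x + pd k b x := by
  unfold pd; rw [fderiv_fun_add ha hb]; rfl

lemma pd_sub {a b : V3 → ℂ} {x : V3} (ha : DifferentiableAt ℝ a x)
    (hb : DifferentiableAt ℝ b x) (k : Fin 3) :
    pd k (fun y => a y - b y) x = pd k a x - pd k b x := by
  unfold pd; rw [fderiv_fun_sub ha hb]; rfl

lemma pd_neg {a : V3 → ℂ} {x : V3} (k : Fin 3) :
    pd k (fun y => -a y) x = -pd k a x := by
  unfold pd; rw [fderiv_fun_neg]; rfl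

lemma pd_mul {a b : V3 → ℂ} {x : V3} (ha : DifferentiableAt ℝ a x)
    (hb : DifferentiableAt ℝ b x) (k : Fin 3) :
    pd k (fun y => a y * b y) x = a x * pd k b x + pd k a x * b x := by
  unfold pd; rw [fderiv_fun_mul ha hb]
  simp [smul_eq_mul, mul_comm]

lemma pd_inv {a : V3 → ℂ} {x : V3} (ha : DifferentiableAt ℝ a x) (h0 : a x ≠ 0) (k : Fin 3) :
    pd k (fun y => (a y)⁻¹) x = -pd k a x / a x ^ 2 := by
  unfold pd
  have : fderiv ℝ (fun y => (a y)⁻¹) x = fderiv ℝ (Inv.inv ∘ a) x := rfl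
  rw [this, ((hasFDerivAt_inv' (𝕜 := ℝ) h0).comp x ha.hasFDerivAt).fderiv]
  simp only [ContinuousLinearMap.comp_apply, ContinuousLinearMap.neg_apply,
    ContinuousLinearMap.mulLeftRight_apply]
  field_simp

lemma pd_div {a b : V3 → ℂ} {x : V3} (ha : DifferentiableAt ℝ a x)
    (hb : DifferentiableAt ℝ b x) (h0 : b x ≠ 0) (k : Fin 3) :
    pd k (fun y => a y / b y) x = (pd k a x * b x - a x * pd k b x) / b x ^ 2 := by
  simp only [div_eq_mul_inv]
  rw [pd_mul ha (hb.fun_inv h0), pd_inv hb h0]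
  field_simp
  ring

lemma contDiffAt_pd {g : V3 → ℂ} {x : V3} {m n : WithTop ℕ∞} (hg : ContDiffAt ℝ n g x)
    (hmn : m + 1 ≤ n) (k : Fin 3) : ContDiffAt ℝ m (pd k g) x := by
  have h1 : ContDiffAt ℝ m (fderiv ℝ g) x := hg.fderiv_right hmn
  exact h1.clm_apply contDiffAt_const

lemma pd_differentiableAt {g : V3 → ℂ} {x : V3} {n : WithTop ℕ∞} (hg : ContDiffAt ℝ n g x)
    (hn : 2 ≤ n) (k : Fin 3) : DifferentiableAt ℝ (pd k g) x := by
  refine (contDiffAt_pd (m := 1) hg ?_ k).differentiableAt one_ne_zero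
  calc (1 : WithTop ℕ∞) + 1 = 2 := by norm_num
  _ ≤ n := hn

lemma pd_comm {g : V3 → ℂ} {x : V3} {n : WithTop ℕ∞} (hg : ContDiffAt ℝ n g x) (hn : 2 ≤ n)
    (i j : Fin 3) : pd i (pd j g) x = pd j (pd i g) x := by
  have hsymm : IsSymmSndFDerivAt ℝ g x :=
    (hg.of_le hn).isSymmSndFDerivAt (by simp)
  have hd : DifferentiableAt ℝ (fderiv ℝ g) x :=
    ((hg.of_le hn).fderiv_right (m := 1) (by norm_num)).differentiableAt one_ne_zero
  have key : ∀ v w : V3, fderiv ℝ (fun y => fderiv ℝ g y v) x w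
      = fderiv ℝ (fderiv ℝ g) x w v := by
    intro v w
    rw [fderiv_clm_apply hd (differentiableAt_const v)]
    simp
  show fderiv ℝ (fun y => fderiv ℝ g y (Pi.single j 1)) x (Pi.single i 1) = _
  rw [key, hsymm (Pi.single i 1) (Pi.single j 1)]
  exact (key _ _).symm

private theorem master (Ω : Set V3) (hΩ : IsOpen Ω) (f w0 : V3 → ℂ) (wv : V3 → Fin 3 → ℂ)
    (hfA : ∀ y ∈ Ω, ContDiffAt ℝ 3 f y) (hf0 : ∀ y ∈ Ω, f y ≠ 0)
    (hw0 : ∀ y ∈ Ω, ContDiffAt ℝ 2 w0 y)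
    (hw1 : ∀ y ∈ Ω, ContDiffAt ℝ 2 (fun z => wv z 0) y)
    (hw2 : ∀ y ∈ Ω, ContDiffAt ℝ 2 (fun z => wv z 1) y)
    (hw3 : ∀ y ∈ Ω, ContDiffAt ℝ 2 (fun z => wv z 2) y)
    (hK0 : ∀ y ∈ Ω, f y * pd 0 w0 y - pd 0 f y * w0 y
       = -(pd 1 (fun z => f z * wv z 2) y - pd 2 (fun z => f z * wv z 1) y))
    (hK1 : ∀ y ∈ Ω, f y * pd 1 w0 y - pd 1 f y * w0 y
       = -(pd 2 (fun z => f z * wv z 0) y - pd 0 (fun z => f z * wv z 2) y))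
    (hK2 : ∀ y ∈ Ω, f y * pd 2 w0 y - pd 2 f y * w0 y
       = -(pd 0 (fun z => f z * wv z 1) y - pd 1 (fun z => f z * wv z 0) y)) :
    (∀ x ∈ Ω, -lapS w0 x + lapS f x / f x * w0 x = 0) ∧
    (∀ x ∈ Ω, dvg (fun y k => f y ^ 2 * pd k (fun z => w0 z / f z) y) x = 0) ∧
    (∀ x ∈ Ω, rot (fun y => (f y ^ 2)⁻¹ • rot (fun z k => f z * wv z k) y) x = 0) := by
  have hf2 : ∀ y ∈ Ω, ContDiffAt ℝ 2 f y := fun y hy => (hfA y hy).of_le (by norm_num)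
  have hfd : ∀ y ∈ Ω, DifferentiableAt ℝ f y :=
    fun y hy => (hf2 y hy).differentiableAt (by norm_num)
  have hw0d : ∀ y ∈ Ω, DifferentiableAt ℝ w0 y :=
    fun y hy => (hw0 y hy).differentiableAt (by norm_num)
  have hP1 : ∀ y ∈ Ω, ContDiffAt ℝ 2 (fun z => f z * wv z 0) y :=
    fun y hy => (hf2 y hy).mul (hw1 y hy)
  have hP2 : ∀ y ∈ Ω, ContDiffAt ℝ 2 (fun z => f z * wv z 1) y :=
    fun y hy => (hf2 y hy).mul (hw2 y hy)
  have hP3 : ∀ y ∈ Ω, ContDiffAt ℝ 2 (fun z => f z * wv z 2) y :=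
    fun y hy => (hf2 y hy).mul (hw3 y hy)
  have hu2 : ∀ y ∈ Ω, ContDiffAt ℝ 2 (fun z => w0 z / f z) y := by
    intro y hy
    simp only [div_eq_mul_inv]
    exact (hw0 y hy).mul ((hf2 y hy).inv (hf0 y hy))
  have hud : ∀ y ∈ Ω, DifferentiableAt ℝ (fun z => w0 z / f z) y :=
    fun y hy => (hu2 y hy).differentiableAt (by norm_num)
  -- div-form of the key identity
  have hfu0 : ∀ y ∈ Ω, f y ^ 2 * pd 0 (fun z => w0 z / f z) y
      = -(pd 1 (fun z => f z * wv z 2) y - pd 2 (fun z => f z * wv z 1) y) := by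
    intro y hy
    rw [pd_div (hw0d y hy) (hfd y hy) (hf0 y hy)]
    have h := hK0 y hy
    have h0 := hf0 y hy
    field_simp
    linear_combination h
  have hfu1 : ∀ y ∈ Ω, f y ^ 2 * pd 1 (fun z => w0 z / f z) y
      = -(pd 2 (fun z => f z * wv z 0) y - pd 0 (fun z => f z * wv z 2) y) := by
    intro y hy
    rw [pd_div (hw0d y hy) (hfd y hy) (hf0 y hy)]
    have h := hK1 y hy
    have h0 := hf0 y hy
    field_simp
    linear_combination h
  have hfu2 : ∀ y ∈ Ω, f y ^ 2 * pd 2 (fun z => w0 z / f z) y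
      = -(pd 0 (fun z => f z * wv z 1) y - pd 1 (fun z => f z * wv z 0) y) := by
    intro y hy
    rw [pd_div (hw0d y hy) (hfd y hy) (hf0 y hy)]
    have h := hK2 y hy
    have h0 := hf0 y hy
    field_simp
    linear_combination h
  -- divergence of the curl vanishes
  have hS : ∀ x ∈ Ω,
      (pd 0 (pd 1 (fun z => f z * wv z 2)) x - pd 0 (pd 2 (fun z => f z * wv z 1)) x)
    + (pd 1 (pd 2 (fun z => f z * wv z 0)) x - pd 1 (pd 0 (fun z => f z * wv z 2)) x)
    + (pd 2 (pd 0 (fun z => f z * wv z 1)) x - pd 2 (pd 1 (fun z => f z * wv z 0)) x) = 0 := by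
    intro x hx
    rw [pd_comm (hP3 x hx) le_rfl 0 1, pd_comm (hP1 x hx) le_rfl 1 2,
      pd_comm (hP2 x hx) le_rfl 2 0]
    ring
  refine ⟨?_, ?_, ?_⟩
  · -- (i)
    intro x hx
    have hmem := hΩ.mem_nhds hx
    have h0x := hf0 x hx
    have hgrad0 : ∀ y ∈ Ω, pd 0 w0 y = pd 0 f y * (w0 y / f y)
        - (f y)⁻¹ * (pd 1 (fun z => f z * wv z 2) y - pd 2 (fun z => f z * wv z 1) y) := by
      intro y hy
      have h := hK0 y hy
      have h0 := hf0 y hy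
      field_simp
      linear_combination h
    have hgrad1 : ∀ y ∈ Ω, pd 1 w0 y = pd 1 f y * (w0 y / f y)
        - (f y)⁻¹ * (pd 2 (fun z => f z * wv z 0) y - pd 0 (fun z => f z * wv z 2) y) := by
      intro y hy
      have h := hK1 y hy
      have h0 := hf0 y hy
      field_simp
      linear_combination h
    have hgrad2 : ∀ y ∈ Ω, pd 2 w0 y = pd 2 f y * (w0 y / f y)
        - (f y)⁻¹ * (pd 0 (fun z => f z * wv z 1) y - pd 1 (fun z => f z * wv z 0) y) := by
      intro y hy
      have h := hK2 y hy
      have h0 := hf0 y hy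
      field_simp
      linear_combination h
    have hdf : ∀ k : Fin 3, DifferentiableAt ℝ (pd k f) x :=
      fun k => pd_differentiableAt (hfA x hx) (by norm_num) k
    have hR0d : DifferentiableAt ℝ
        (fun y => pd 1 (fun z => f z * wv z 2) y - pd 2 (fun z => f z * wv z 1) y) x :=
      (pd_differentiableAt (hP3 x hx) le_rfl 1).sub (pd_differentiableAt (hP2 x hx) le_rfl 2)
    have hR1d : DifferentiableAt ℝ
        (fun y => pd 2 (fun z => f z * wv z 0) y - pd 0 (fun z => f z * wv z 2) y) x :=
      (pd_differentiableAt (hP1 x hx) le_rfl 2).sub (pd_differentiableAt (hP3 x hx) le_rfl 0)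
    have hR2d : DifferentiableAt ℝ
        (fun y => pd 0 (fun z => f z * wv z 1) y - pd 1 (fun z => f z * wv z 0) y) x :=
      (pd_differentiableAt (hP2 x hx) le_rfl 0).sub (pd_differentiableAt (hP1 x hx) le_rfl 1)
    have hinvd : DifferentiableAt ℝ (fun y => (f y)⁻¹) x := (hfd x hx).inv h0x
    have e0 : f x ^ 2 * pd 0 (pd 0 w0) x
        = f x ^ 2 * (pd 0 f x * pd 0 (fun z => w0 z / f z) x)
          + f x * (pd 0 (pd 0 f) x * w0 x)
          - f x * (pd 0 (pd 1 (fun z => f z * wv z 2)) x - pd 0 (pd 2 (fun z => f z * wv z 1)) x)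
          + pd 0 f x * (pd 1 (fun z => f z * wv z 2) x - pd 2 (fun z => f z * wv z 1) x) := by
      have hre : pd 0 (pd 0 w0) x = pd 0 (fun y => pd 0 f y * (w0 y / f y)
          - (f y)⁻¹ * (pd 1 (fun z => f z * wv z 2) y - pd 2 (fun z => f z * wv z 1) y)) x :=
        pd_congr_ev (Filter.eventuallyEq_of_mem hmem (fun y hy => hgrad0 y hy)) 0
      rw [hre, pd_sub ((hdf 0).fun_mul (hud x hx)) (hinvd.fun_mul hR0d),
        pd_mul (hdf 0) (hud x hx), pd_mul hinvd hR0d, pd_inv (hfd x hx) h0x,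
        pd_sub (pd_differentiableAt (hP3 x hx) le_rfl 1) (pd_differentiableAt (hP2 x hx) le_rfl 2)]
      field_simp
      ring
    have e1 : f x ^ 2 * pd 1 (pd 1 w0) x
        = f x ^ 2 * (pd 1 f x * pd 1 (fun z => w0 z / f z) x)
          + f x * (pd 1 (pd 1 f) x * w0 x)
          - f x * (pd 1 (pd 2 (fun z => f z * wv z 0)) x - pd 1 (pd 0 (fun z => f z * wv z 2)) x)
          + pd 1 f x * (pd 2 (fun z => f z * wv z 0) x - pd 0 (fun z => f z * wv z 2) x) := by
      have hre : pd 1 (pd 1 w0) x = pd 1 (fun y => pd 1 f y * (w0 y / f y)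
          - (f y)⁻¹ * (pd 2 (fun z => f z * wv z 0) y - pd 0 (fun z => f z * wv z 2) y)) x :=
        pd_congr_ev (Filter.eventuallyEq_of_mem hmem (fun y hy => hgrad1 y hy)) 1
      rw [hre, pd_sub ((hdf 1).fun_mul (hud x hx)) (hinvd.fun_mul hR1d),
        pd_mul (hdf 1) (hud x hx), pd_mul hinvd hR1d, pd_inv (hfd x hx) h0x,
        pd_sub (pd_differentiableAt (hP1 x hx) le_rfl 2) (pd_differentiableAt (hP3 x hx) le_rfl 0)]
      field_simp
      ring
    have e2 : f x ^ 2 * pd 2 (pd 2 w0) x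
        = f x ^ 2 * (pd 2 f x * pd 2 (fun z => w0 z / f z) x)
          + f x * (pd 2 (pd 2 f) x * w0 x)
          - f x * (pd 2 (pd 0 (fun z => f z * wv z 1)) x - pd 2 (pd 1 (fun z => f z * wv z 0)) x)
          + pd 2 f x * (pd 0 (fun z => f z * wv z 1) x - pd 1 (fun z => f z * wv z 0) x) := by
      have hre : pd 2 (pd 2 w0) x = pd 2 (fun y => pd 2 f y * (w0 y / f y)
          - (f y)⁻¹ * (pd 0 (fun z => f z * wv z 1) y - pd 1 (fun z => f z * wv z 0) y)) x :=
        pd_congr_ev (Filter.eventuallyEq_of_mem hmem (fun y hy => hgrad2 y hy)) 2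
      rw [hre, pd_sub ((hdf 2).fun_mul (hud x hx)) (hinvd.fun_mul hR2d),
        pd_mul (hdf 2) (hud x hx), pd_mul hinvd hR2d, pd_inv (hfd x hx) h0x,
        pd_sub (pd_differentiableAt (hP2 x hx) le_rfl 0) (pd_differentiableAt (hP1 x hx) le_rfl 1)]
      field_simp
      ring
    have hb0 := hfu0 x hx
    have hb1 := hfu1 x hx
    have hb2 := hfu2 x hx
    have hSx := hS x hx
    have key : f x ^ 2 * (pd 0 (pd 0 w0) x + pd 1 (pd 1 w0) x + pd 2 (pd 2 w0) x)
        = f x * (pd 0 (pd 0 f) x + pd 1 (pd 1 f) x + pd 2 (pd 2 f) x) * w0 x := by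
      linear_combination e0 + e1 + e2 - f x * hSx
        + pd 0 f x * hb0 + pd 1 f x * hb1 + pd 2 f x * hb2
    have key2 : f x * (pd 0 (pd 0 w0) x + pd 1 (pd 1 w0) x + pd 2 (pd 2 w0) x)
        = (pd 0 (pd 0 f) x + pd 1 (pd 1 f) x + pd 2 (pd 2 f) x) * w0 x :=
      mul_left_cancel₀ h0x (by linear_combination key)
    have hfin : lapS f x / f x * w0 x = lapS w0 x := by
      rw [div_mul_eq_mul_div, div_eq_iff h0x]
      simp only [lapS]
      linear_combination -key2
    rw [hfin]
    ring
  · -- (ii)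
    intro x hx
    have hmem := hΩ.mem_nhds hx
    have t0 : pd 0 (fun y => f y ^ 2 * pd 0 (fun z => w0 z / f z) y) x
        = -(pd 0 (pd 1 (fun z => f z * wv z 2)) x - pd 0 (pd 2 (fun z => f z * wv z 1)) x) := by
      rw [pd_congr_ev (Filter.eventuallyEq_of_mem hmem (fun y hy => hfu0 y hy)) 0, pd_neg,
        pd_sub (pd_differentiableAt (hP3 x hx) le_rfl 1) (pd_differentiableAt (hP2 x hx) le_rfl 2)]
    have t1 : pd 1 (fun y => f y ^ 2 * pd 1 (fun z => w0 z / f z) y) x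
        = -(pd 1 (pd 2 (fun z => f z * wv z 0)) x - pd 1 (pd 0 (fun z => f z * wv z 2)) x) := by
      rw [pd_congr_ev (Filter.eventuallyEq_of_mem hmem (fun y hy => hfu1 y hy)) 1, pd_neg,
        pd_sub (pd_differentiableAt (hP1 x hx) le_rfl 2) (pd_differentiableAt (hP3 x hx) le_rfl 0)]
    have t2 : pd 2 (fun y => f y ^ 2 * pd 2 (fun z => w0 z / f z) y) x
        = -(pd 2 (pd 0 (fun z => f z * wv z 1)) x - pd 2 (pd 1 (fun z => f z * wv z 0)) x) := by
      rw [pd_congr_ev (Filter.eventuallyEq_of_mem hmem (fun y hy => hfu2 y hy)) 2, pd_neg,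
        pd_sub (pd_differentiableAt (hP2 x hx) le_rfl 0) (pd_differentiableAt (hP1 x hx) le_rfl 1)]
    have hSx := hS x hx
    simp only [dvg]
    rw [t0, t1, t2]
    linear_combination -hSx
  · -- (iii)
    intro x hx
    have hmem := hΩ.mem_nhds hx
    have hiu0 : ∀ y ∈ Ω, (f y ^ 2)⁻¹
        * (pd 1 (fun z => f z * wv z 2) y - pd 2 (fun z => f z * wv z 1) y)
        = -pd 0 (fun z => w0 z / f z) y := by
      intro y hy
      have h := hfu0 y hy
      have h2 : f y ^ 2 ≠ 0 := pow_ne_zero 2 (hf0 y hy)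
      rw [inv_mul_eq_div, div_eq_iff h2]
      linear_combination h
    have hiu1 : ∀ y ∈ Ω, (f y ^ 2)⁻¹
        * (pd 2 (fun z => f z * wv z 0) y - pd 0 (fun z => f z * wv z 2) y)
        = -pd 1 (fun z => w0 z / f z) y := by
      intro y hy
      have h := hfu1 y hy
      have h2 : f y ^ 2 ≠ 0 := pow_ne_zero 2 (hf0 y hy)
      rw [inv_mul_eq_div, div_eq_iff h2]
      linear_combination h
    have hiu2 : ∀ y ∈ Ω, (f y ^ 2)⁻¹
        * (pd 0 (fun z => f z * wv z 1) y - pd 1 (fun z => f z * wv z 0) y)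
        = -pd 2 (fun z => w0 z / f z) y := by
      intro y hy
      have h := hfu2 y hy
      have h2 : f y ^ 2 ≠ 0 := pow_ne_zero 2 (hf0 y hy)
      rw [inv_mul_eq_div, div_eq_iff h2]
      linear_combination h
    have hcomp : ∀ y : V3, ∀ m : Fin 3,
        ((f y ^ 2)⁻¹ • rot (fun z k => f z * wv z k) y) m
        = (f y ^ 2)⁻¹ * (rot (fun z k => f z * wv z k) y m) := fun y m => rfl
    funext m
    fin_cases m
    · show pd 1 (fun y => ((f y ^ 2)⁻¹ • rot (fun z k => f z * wv z k) y) 2) x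
        - pd 2 (fun y => ((f y ^ 2)⁻¹ • rot (fun z k => f z * wv z k) y) 1) x = 0
      have a1 : pd 1 (fun y => ((f y ^ 2)⁻¹ • rot (fun z k => f z * wv z k) y) 2) x
          = -pd 1 (pd 2 (fun z => w0 z / f z)) x := by
        rw [pd_congr_ev (F := fun y => ((f y ^ 2)⁻¹ • rot (fun z k => f z * wv z k) y) 2)
            (G := fun y => -pd 2 (fun z => w0 z / f z) y)
            (Filter.eventuallyEq_of_mem hmem (fun y hy => hiu2 y hy)) 1, pd_neg]
      have a2 : pd 2 (fun y => ((f y ^ 2)⁻¹ • rot (fun z k => f z * wv z k) y) 1) x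
          = -pd 2 (pd 1 (fun z => w0 z / f z)) x := by
        rw [pd_congr_ev (F := fun y => ((f y ^ 2)⁻¹ • rot (fun z k => f z * wv z k) y) 1)
            (G := fun y => -pd 1 (fun z => w0 z / f z) y)
            (Filter.eventuallyEq_of_mem hmem (fun y hy => hiu1 y hy)) 2, pd_neg]
      rw [a1, a2, pd_comm (hu2 x hx) le_rfl 1 2]
      ring
    · show pd 2 (fun y => ((f y ^ 2)⁻¹ • rot (fun z k => f z * wv z k) y) 0) x
        - pd 0 (fun y => ((f y ^ 2)⁻¹ • rot (fun z k => f z * wv z k) y) 2) x = 0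
      have a1 : pd 2 (fun y => ((f y ^ 2)⁻¹ • rot (fun z k => f z * wv z k) y) 0) x
          = -pd 2 (pd 0 (fun z => w0 z / f z)) x := by
        rw [pd_congr_ev (F := fun y => ((f y ^ 2)⁻¹ • rot (fun z k => f z * wv z k) y) 0)
            (G := fun y => -pd 0 (fun z => w0 z / f z) y)
            (Filter.eventuallyEq_of_mem hmem (fun y hy => hiu0 y hy)) 2, pd_neg]
      have a2 : pd 0 (fun y => ((f y ^ 2)⁻¹ • rot (fun z k => f z * wv z k) y) 2) x
          = -pd 0 (pd 2 (fun z => w0 z / f z)) x := by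
        rw [pd_congr_ev (F := fun y => ((f y ^ 2)⁻¹ • rot (fun z k => f z * wv z k) y) 2)
            (G := fun y => -pd 2 (fun z => w0 z / f z) y)
            (Filter.eventuallyEq_of_mem hmem (fun y hy => hiu2 y hy)) 0, pd_neg]
      rw [a1, a2, pd_comm (hu2 x hx) le_rfl 2 0]
      ring
    · show pd 0 (fun y => ((f y ^ 2)⁻¹ • rot (fun z k => f z * wv z k) y) 1) x
        - pd 1 (fun y => ((f y ^ 2)⁻¹ • rot (fun z k => f z * wv z k) y) 0) x = 0
      have a1 : pd 0 (fun y => ((f y ^ 2)⁻¹ • rot (fun z k => f z * wv z k) y) 1) x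
          = -pd 0 (pd 1 (fun z => w0 z / f z)) x := by
        rw [pd_congr_ev (F := fun y => ((f y ^ 2)⁻¹ • rot (fun z k => f z * wv z k) y) 1)
            (G := fun y => -pd 1 (fun z => w0 z / f z) y)
            (Filter.eventuallyEq_of_mem hmem (fun y hy => hiu1 y hy)) 0, pd_neg]
      have a2 : pd 1 (fun y => ((f y ^ 2)⁻¹ • rot (fun z k => f z * wv z k) y) 0) x
          = -pd 1 (pd 0 (fun z => w0 z / f z)) x := by
        rw [pd_congr_ev (F := fun y => ((f y ^ 2)⁻¹ • rot (fun z k => f z * wv z k) y) 0)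
            (G := fun y => -pd 0 (fun z => w0 z / f z) y)
            (Filter.eventuallyEq_of_mem hmem (fun y hy => hiu0 y hy)) 1, pd_neg]
      rw [a1, a2, pd_comm (hu2 x hx) le_rfl 0 1]
      ring


/-- consequences of the main quaternionic Vekua equation
DW = (Df/f)·W̄ for W = W₀ + W⃗. -/
theorem stmt15 (Ω : Set V3) (hΩ : IsOpen Ω) (f : V3 → ℂ)
    (hf : ContDiffOn ℝ 3 f Ω) (hf0 : ∀ x ∈ Ω, f x ≠ 0)
    (W : V3 → HC) (hW : QContDiffOn 2 W Ω)
    (hWe : ∀ x ∈ Ω, Dq W x = vecq (fun k => grad f x k / f x) * qconj (W x)) :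
    (∀ x ∈ Ω, -lapS (fun y => (W y).re) x + (lapS f x / f x) * (W x).re = 0) ∧
    (∀ x ∈ Ω, dvg (fun y k => f y ^ 2 * pd k (fun z => (W z).re / f z) y) x = 0) ∧
    (∀ x ∈ Ω, rot (fun y => (f y ^ 2)⁻¹ •
        rot (fun z k => f z * vecPart (W z) k) y) x = 0) := by
  obtain ⟨hWr, hWi, hWj, hWk⟩ := hW
  have hfA : ∀ y ∈ Ω, ContDiffAt ℝ 3 f y :=
    fun y hy => (hf y hy).contDiffAt (hΩ.mem_nhds hy)
  have hWrA : ∀ y ∈ Ω, ContDiffAt ℝ 2 (fun z => (W z).re) y :=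
    fun y hy => (hWr y hy).contDiffAt (hΩ.mem_nhds hy)
  have hWiA : ∀ y ∈ Ω, ContDiffAt ℝ 2 (fun z => (W z).imI) y :=
    fun y hy => (hWi y hy).contDiffAt (hΩ.mem_nhds hy)
  have hWjA : ∀ y ∈ Ω, ContDiffAt ℝ 2 (fun z => (W z).imJ) y :=
    fun y hy => (hWj y hy).contDiffAt (hΩ.mem_nhds hy)
  have hWkA : ∀ y ∈ Ω, ContDiffAt ℝ 2 (fun z => (W z).imK) y :=
    fun y hy => (hWk y hy).contDiffAt (hΩ.mem_nhds hy)
  have hfd : ∀ y ∈ Ω, DifferentiableAt ℝ f y :=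
    fun y hy => (hfA y hy).differentiableAt (by norm_num)
  have hWid : ∀ y ∈ Ω, DifferentiableAt ℝ (fun z => (W z).imI) y :=
    fun y hy => (hWiA y hy).differentiableAt (by norm_num)
  have hWjd : ∀ y ∈ Ω, DifferentiableAt ℝ (fun z => (W z).imJ) y :=
    fun y hy => (hWjA y hy).differentiableAt (by norm_num)
  have hWkd : ∀ y ∈ Ω, DifferentiableAt ℝ (fun z => (W z).imK) y :=
    fun y hy => (hWkA y hy).differentiableAt (by norm_num)
  have hV1 : ∀ y ∈ Ω, f y * pd 0 (fun z => (W z).re) y - pd 0 f y * (W y).re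
      = -(pd 1 (fun z => f z * (W z).imK) y - pd 2 (fun z => f z * (W z).imJ) y) := by
    intro y hy
    have h := congrArg QuaternionAlgebra.imI (hWe y hy)
    simp only [Dq, Quaternion.imI_add, Quaternion.imI_mul] at h
    simp only [Dq, qpd, e1, e2, e3, vecq, qconj, grad, Quaternion.imI_mul, Quaternion.imI_add,
      Quaternion.re_mul, Quaternion.imJ_mul, Quaternion.imK_mul] at h
    rw [pd_mul (hfd y hy) (hWkd y hy) 1, pd_mul (hfd y hy) (hWjd y hy) 2]
    have h0 := hf0 y hy
    field_simp at h
    linear_combination h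
  have hV2 : ∀ y ∈ Ω, f y * pd 1 (fun z => (W z).re) y - pd 1 f y * (W y).re
      = -(pd 2 (fun z => f z * (W z).imI) y - pd 0 (fun z => f z * (W z).imK) y) := by
    intro y hy
    have h := congrArg QuaternionAlgebra.imJ (hWe y hy)
    simp only [Dq, Quaternion.imJ_add, Quaternion.imJ_mul] at h
    simp only [Dq, qpd, e1, e2, e3, vecq, qconj, grad, Quaternion.imJ_mul, Quaternion.imJ_add,
      Quaternion.re_mul, Quaternion.imI_mul, Quaternion.imK_mul] at h
    rw [pd_mul (hfd y hy) (hWid y hy) 2, pd_mul (hfd y hy) (hWkd y hy) 0]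
    have h0 := hf0 y hy
    field_simp at h
    linear_combination h
  have hV3 : ∀ y ∈ Ω, f y * pd 2 (fun z => (W z).re) y - pd 2 f y * (W y).re
      = -(pd 0 (fun z => f z * (W z).imJ) y - pd 1 (fun z => f z * (W z).imI) y) := by
    intro y hy
    have h := congrArg QuaternionAlgebra.imK (hWe y hy)
    simp only [Dq, Quaternion.imK_add, Quaternion.imK_mul] at h
    simp only [Dq, qpd, e1, e2, e3, vecq, qconj, grad, Quaternion.imK_mul, Quaternion.imK_add,
      Quaternion.re_mul, Quaternion.imI_mul, Quaternion.imJ_mul] at h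
    rw [pd_mul (hfd y hy) (hWjd y hy) 0, pd_mul (hfd y hy) (hWid y hy) 1]
    have h0 := hf0 y hy
    field_simp at h
    refine mul_left_cancel₀ (pow_ne_zero 2 h0) ?_
    linear_combination f y ^ 2 * h
  exact master Ω hΩ f (fun z => (W z).re) (fun z => vecPart (W z)) hfA hf0 hWrA
    hWiA hWjA hWkA hV1 hV2 hV3
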